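/- There exists a universal constant C > 0 with the following property. Let c > 0 be a real constant, let G be a finite connected simple graph on a vertex set V of size n ≥ 2 equipped with a fixed linear order on V, and set β = 1/(2c). Let (δ_u)_{u ∈ V} be independent random variables, each exponentially distributed with rate β, and define cluster(w) := the least vertex u ∈ V (in the fixed linear order) minimizing dist_G(u, w) − δ_u. Call an unordered pair {a, b} of distinct labels a contracted edge if G contains an edge {u, v} with cluster(u) = a and cluster(v) = b. Then the expected number of contracted edges is at most C · e^{1/c} · n. In particular, after one application of the low-diameter decomposition with constant parameter β, the contracted inter-cluster graph has O(n) edges in expectation. -/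

import Mathlib

open MeasureTheory ProbabilityTheory Finset

lemma expTail_Ioi {β : ℝ} (hβ : 0 < β) (t : ℝ) :
    expMeasure β (Set.Ioi t) = ENNReal.ofReal (Real.exp (-(β * max t 0))) := by
  haveI : IsProbabilityMeasure (expMeasure β) := isProbabilityMeasure_expMeasure hβ
  have hIic : expMeasure β (Set.Iic t) = ENNReal.ofReal (if 0 ≤ t then 1 - Real.exp (-(β * t)) else 0) := by
    rw [← ofReal_cdf, cdf_expMeasure_eq hβ]
  have hcompl : expMeasure β (Set.Ioi t) = 1 - expMeasure β (Set.Iic t) := by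
    rw [← Set.compl_Iic, measure_compl measurableSet_Iic (measure_ne_top _ _), measure_univ]
  rw [hcompl, hIic]
  rcases le_or_gt 0 t with h | h
  · rw [if_pos h, max_eq_left h, ← ENNReal.ofReal_one, ← ENNReal.ofReal_sub _ (by
      have := Real.exp_le_one_iff.2 (by nlinarith : -(β*t) ≤ 0); linarith [Real.exp_pos (-(β*t))])]
    ring_nf
  · rw [if_neg (not_le.2 h), max_eq_right h.le, mul_zero, neg_zero, Real.exp_zero,
      ENNReal.ofReal_zero, tsub_zero, ENNReal.ofReal_one]

lemma expTail_Ici {β : ℝ} (hβ : 0 < β) (t : ℝ) :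
    expMeasure β (Set.Ici t) = ENNReal.ofReal (Real.exp (-(β * max t 0))) := by
  have h0 : expMeasure β {t} = 0 := by
    have : expMeasure β ≪ volume := by
      rw [expMeasure, gammaMeasure]; exact withDensity_absolutelyContinuous _ _
    exact this (Real.volume_singleton)
  rw [← measure_congr (Ioi_ae_eq_Ici' h0), expTail_Ioi hβ]

lemma iIndepFun_congr' {Ω ι : Type} [MeasurableSpace Ω] [Countable ι] {μ : Measure Ω}
    {f g : ι → Ω → ℝ} (h : iIndepFun f μ)
    (hfg : ∀ i, f i =ᵐ[μ] g i) :
    iIndepFun g μ := by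
  rw [iIndepFun_iff_measure_inter_preimage_eq_mul] at h ⊢
  intro S sets H
  have hall : ∀ᵐ ω ∂μ, ∀ i, f i ω = g i ω := MeasureTheory.ae_all_iff.2 hfg
  have h1 : μ (⋂ i ∈ S, g i ⁻¹' sets i) = μ (⋂ i ∈ S, f i ⁻¹' sets i) := by
    apply measure_congr
    filter_upwards [hall] with ω hω
    have : (ω ∈ ⋂ i ∈ S, g i ⁻¹' sets i) ↔ (ω ∈ ⋂ i ∈ S, f i ⁻¹' sets i) := by
      simp only [Set.mem_iInter, Set.mem_preimage, hω]
    exact eq_iff_iff.mpr this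
  rw [h1, h S H]
  refine Finset.prod_congr rfl fun i _ => ?_
  apply measure_congr
  filter_upwards [hall] with ω hω
  exact congrArg (fun x => x ∈ sets i) (hω i)

lemma expTail_compare {β : ℝ} (hβ : 0 < β) (t : ℝ) :
    expMeasure β (Set.Ici (t - 2)) ≤ ENNReal.ofReal (Real.exp (2*β)) * expMeasure β (Set.Ioi t) := by
  rw [expTail_Ici hβ, expTail_Ioi hβ, ← ENNReal.ofReal_mul (Real.exp_pos _).le, ← Real.exp_add]
  apply ENNReal.ofReal_le_ofReal
  apply Real.exp_le_exp.2
  have h1 : max t 0 - max (t - 2) 0 ≤ 2 := by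
    rcases le_or_gt t 0 with h | h
    · rw [max_eq_right h, max_eq_right (by linarith : t - 2 ≤ 0)]; norm_num
    · rcases le_or_gt t 2 with h2 | h2
      · rw [max_eq_left h.le, max_eq_right (by linarith)]; linarith
      · rw [max_eq_left h.le, max_eq_left (by linarith)]; linarith
  nlinarith

lemma prob_shift_le {Ω : Type} [MeasurableSpace Ω] (μ : Measure Ω) [IsProbabilityMeasure μ]
    {β : ℝ} (hβ : 0 < β) {Y X : Ω → ℝ} (hY : Measurable Y) (hX : Measurable X)
    (hmap : μ.map X = expMeasure β) (hind : IndepFun Y X μ) (r : ℝ) :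
    μ {ω | Y ω + (r - 2) ≤ X ω} ≤
      ENNReal.ofReal (Real.exp (2*β)) * μ {ω | Y ω + r < X ω} := by
  haveI : IsProbabilityMeasure (expMeasure β) := isProbabilityMeasure_expMeasure hβ
  haveI : IsProbabilityMeasure (μ.map Y) := Measure.isProbabilityMeasure_map hY.aemeasurable
  have hjoint : μ.map (fun ω => (Y ω, X ω)) = (μ.map Y).prod (expMeasure β) := by
    rw [← hmap]
    exact (indepFun_iff_map_prod_eq_prod_map_map hY.aemeasurable hX.aemeasurable).1 hind
  have hA : MeasurableSet {p : ℝ × ℝ | p.1 + (r-2) ≤ p.2} :=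
    measurableSet_le (measurable_fst.add_const _) measurable_snd
  have hB : MeasurableSet {p : ℝ × ℝ | p.1 + r < p.2} :=
    measurableSet_lt (measurable_fst.add_const _) measurable_snd
  have e1 : μ {ω | Y ω + (r - 2) ≤ X ω}
      = ∫⁻ y, expMeasure β (Set.Ici (y + (r-2))) ∂(μ.map Y) := by
    have := Measure.map_apply_of_aemeasurable (μ := μ)
      (hY.aemeasurable.prodMk hX.aemeasurable) hA
    rw [hjoint] at this
    rw [show {ω | Y ω + (r - 2) ≤ X ω} = (fun ω => (Y ω, X ω)) ⁻¹' {p : ℝ × ℝ | p.1 + (r-2) ≤ p.2} from rfl,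
      ← this, Measure.prod_apply hA]
    refine lintegral_congr fun y => ?_
    congr 1
  have e2 : μ {ω | Y ω + r < X ω}
      = ∫⁻ y, expMeasure β (Set.Ioi (y + r)) ∂(μ.map Y) := by
    have := Measure.map_apply_of_aemeasurable (μ := μ)
      (hY.aemeasurable.prodMk hX.aemeasurable) hB
    rw [hjoint] at this
    rw [show {ω | Y ω + r < X ω} = (fun ω => (Y ω, X ω)) ⁻¹' {p : ℝ × ℝ | p.1 + r < p.2} from rfl,
      ← this, Measure.prod_apply hB]
    refine lintegral_congr fun y => ?_
    congr 1
  rw [e1, e2, ← lintegral_const_mul' _ _ ENNReal.ofReal_ne_top]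
  refine lintegral_mono fun y => ?_
  have := expTail_compare hβ (t := y + r)
  simpa [show y + (r - 2) = y + r - 2 by ring] using this

lemma core_sum {V Ω : Type} [Fintype V] [DecidableEq V] [MeasurableSpace Ω]
    (μ : Measure Ω) [IsProbabilityMeasure μ] {β : ℝ} (hβ : 0 < β)
    (δm : V → Ω → ℝ) (hmeas : ∀ u, Measurable (δm u))
    (hmap : ∀ u, μ.map (δm u) = expMeasure β)
    (hindep : iIndepFun δm μ)
    (hcard : 2 ≤ Fintype.card V) (d : V → ℝ) :
    ∑ a : V, μ {ω | ∀ u', d a - δm a ω ≤ d u' - δm u' ω + 2}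
      ≤ ENNReal.ofReal (Real.exp (2*β)) := by
  classical
  have hEne : ∀ a : V, (Finset.univ.erase a).Nonempty := by
    intro a
    apply Finset.card_pos.mp
    rw [Finset.card_erase_of_mem (Finset.mem_univ a), Finset.card_univ]
    omega
  have hEa : ∀ a : V, (Finset.univ.erase a).attach.Nonempty :=
    fun a => Finset.attach_nonempty_iff.mpr (hEne a)
  set Y : V → Ω → ℝ := fun a ω =>
    (Finset.univ.erase a).attach.sup' (hEa a) (fun i => δm i.1 ω - d i.1) with hY
  have hYmeas : ∀ a, Measurable (Y a) := by
    intro a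
    have heq : Y a = (Finset.univ.erase a).attach.sup' (hEa a)
        (fun i ω => δm i.1 ω - d i.1) := by
      funext ω
      rw [Finset.sup'_apply]
    rw [heq]
    exact Finset.measurable_sup' (hEa a) (fun i _ => (hmeas i.1).sub measurable_const)
  have hsetC : ∀ a : V, {ω | ∀ u', d a - δm a ω ≤ d u' - δm u' ω + 2}
      = {ω | Y a ω + (d a - 2) ≤ δm a ω} := by
    intro a
    ext ω
    simp only [Set.mem_setOf_eq]
    constructor
    · intro h
      have : Y a ω ≤ δm a ω - (d a - 2) :=
        Finset.sup'_le _ _ fun i _ => by have := h i.1; linarith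
      linarith
    · intro h u'
      by_cases hu : u' = a
      · subst hu; linarith
      · have hm : (⟨u', Finset.mem_erase.mpr ⟨hu, Finset.mem_univ u'⟩⟩ :
            {x // x ∈ Finset.univ.erase a}) ∈ (Finset.univ.erase a).attach :=
          Finset.mem_attach _ _
        have h1 : δm u' ω - d u' ≤ Y a ω :=
          Finset.le_sup' (fun i : {x // x ∈ Finset.univ.erase a} => δm i.1 ω - d i.1) hm
        linarith
  have hind : ∀ a : V, IndepFun (Y a) (δm a) μ := by
    intro a
    have hIF := hindep.indepFun_finset (Finset.univ.erase a) {a}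
      (Finset.disjoint_singleton_right.mpr (Finset.notMem_erase a _)) hmeas
    have hg1 : Measurable (fun x : ({x // x ∈ Finset.univ.erase a} → ℝ) =>
        (Finset.univ.erase a).attach.sup' (hEa a) (fun i => x i - d i.1)) := by
      have heq : (fun x : ({x // x ∈ Finset.univ.erase a} → ℝ) =>
          (Finset.univ.erase a).attach.sup' (hEa a) (fun i => x i - d i.1))
          = (Finset.univ.erase a).attach.sup' (hEa a)
            (fun i (x : {x // x ∈ Finset.univ.erase a} → ℝ) => x i - d i.1) := by
        funext x
        rw [Finset.sup'_apply]
      rw [heq]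
      exact Finset.measurable_sup' (hEa a)
        (fun i _ => (measurable_pi_apply i).sub measurable_const)
    have hg2 : Measurable (fun x : ({x // x ∈ ({a} : Finset V)} → ℝ) =>
        x ⟨a, Finset.mem_singleton_self a⟩) := measurable_pi_apply _
    exact hIF.comp hg1 hg2
  calc ∑ a : V, μ {ω | ∀ u', d a - δm a ω ≤ d u' - δm u' ω + 2}
      ≤ ∑ a : V, ENNReal.ofReal (Real.exp (2*β)) * μ {ω | Y a ω + d a < δm a ω} := by
        refine Finset.sum_le_sum fun a _ => ?_
        rw [hsetC a]
        exact prob_shift_le μ hβ (hYmeas a) (hmeas a) (hmap a) (hind a) (d a)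
    _ = ENNReal.ofReal (Real.exp (2*β)) * ∑ a : V, μ {ω | Y a ω + d a < δm a ω} := by
        rw [Finset.mul_sum]
    _ ≤ ENNReal.ofReal (Real.exp (2*β)) * 1 := by
        gcongr
        have hdisj : (↑(Finset.univ : Finset V) : Set V).PairwiseDisjoint
            (fun a => {ω | Y a ω + d a < δm a ω}) := by
          intro a _ b _ hab
          refine Set.disjoint_left.mpr fun ω ha hb => ?_
          simp only [Set.mem_setOf_eq] at ha hb
          have h1 : δm b ω - d b ≤ Y a ω :=
            Finset.le_sup' (fun i : {x // x ∈ Finset.univ.erase a} =>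
              δm i.1 ω - d i.1) (Finset.mem_attach _
                ⟨b, Finset.mem_erase.mpr ⟨(Ne.symm hab), Finset.mem_univ b⟩⟩)
          have h2 : δm a ω - d a ≤ Y b ω :=
            Finset.le_sup' (fun i : {x // x ∈ Finset.univ.erase b} =>
              δm i.1 ω - d i.1) (Finset.mem_attach _
                ⟨a, Finset.mem_erase.mpr ⟨hab, Finset.mem_univ a⟩⟩)
          linarith
        have := measure_biUnion_finset (μ := μ) hdisj
          (fun a _ => measurableSet_lt ((hYmeas a).add_const _) (hmeas a))
        rw [← this]
        exact prob_le_one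
    _ = ENNReal.ofReal (Real.exp (2*β)) := mul_one _

lemma card_le_sum_ite {V : Type} [Fintype V] [DecidableEq V]
    (G : SimpleGraph V) [DecidableRel G.Adj] (hconn : G.Connected)
    (x : V → ℝ) (cl : V → V)
    (hcl : ∀ w : V, ∀ u' : V,
      (G.dist (cl w) w : ℝ) - x (cl w) ≤ (G.dist u' w : ℝ) - x u') :
    (((G.edgeFinset.image (Sym2.map cl)).filter (fun e => ¬ e.IsDiag)).card : ℝ)
      ≤ ∑ v : V, ∑ a : V,
        (if (∀ u' : V, (G.dist a v : ℝ) - x a ≤ (G.dist u' v : ℝ) - x u' + 2)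
          then (1:ℝ) else 0) := by
  classical
  set P : V × V → Prop :=
    fun p => ∀ u' : V, (G.dist p.2 p.1 : ℝ) - x p.2 ≤ (G.dist u' p.1 : ℝ) - x u' + 2 with hP
  have hsum : ∑ v : V, ∑ a : V,
      (if (∀ u' : V, (G.dist a v : ℝ) - x a ≤ (G.dist u' v : ℝ) - x u' + 2)
        then (1:ℝ) else 0)
      = ((Finset.univ.filter P).card : ℝ) := by
    have h1 : ∑ v : V, ∑ a : V,
        (if (∀ u' : V, (G.dist a v : ℝ) - x a ≤ (G.dist u' v : ℝ) - x u' + 2)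
          then (1:ℝ) else 0)
        = ∑ p ∈ (Finset.univ ×ˢ Finset.univ : Finset (V × V)),
          (if P p then (1:ℝ) else 0) := by
      rw [Finset.sum_product]
    rw [h1, Finset.univ_product_univ, Finset.sum_boole]
  rw [hsum]
  have hsub : (G.edgeFinset.image (Sym2.map cl)).filter (fun e => ¬ e.IsDiag)
      ⊆ (Finset.univ.filter P).image (fun p : V × V => s(p.2, cl p.1)) := by
    intro e' he'
    rw [Finset.mem_filter] at he'
    obtain ⟨hmem, _⟩ := he'
    rw [Finset.mem_image] at hmem
    obtain ⟨e, he, rfl⟩ := hmem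
    rw [SimpleGraph.mem_edgeFinset] at he
    induction e using Sym2.ind with
    | _ u v =>
      have hadj : G.Adj u v := he
      rw [Finset.mem_image]
      refine ⟨(v, cl u), ?_, ?_⟩
      · rw [Finset.mem_filter]
        refine ⟨Finset.mem_univ _, ?_⟩
        intro u'
        have h1 := hcl u (cl u)
        have h2 := hcl u u'
        have htri1 : G.dist (cl u) v ≤ G.dist (cl u) u + G.dist u v :=
          hconn.dist_triangle
        have htri2 : G.dist u' u ≤ G.dist u' v + G.dist v u :=
          hconn.dist_triangle
        have hd1 : G.dist u v = 1 := SimpleGraph.dist_eq_one_iff_adj.mpr hadj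
        have hd2 : G.dist v u = 1 := SimpleGraph.dist_eq_one_iff_adj.mpr hadj.symm
        rw [hd1] at htri1
        rw [hd2] at htri2
        have htri1' : (G.dist (cl u) v : ℝ) ≤ (G.dist (cl u) u : ℝ) + 1 := by
          exact_mod_cast htri1
        have htri2' : (G.dist u' u : ℝ) ≤ (G.dist u' v : ℝ) + 1 := by
          exact_mod_cast htri2
        have := hcl u u'
        simp only
        linarith
      · simp only [Sym2.map_pair_eq]
  calc (((G.edgeFinset.image (Sym2.map cl)).filter (fun e => ¬ e.IsDiag)).card : ℝ)
      ≤ (((Finset.univ.filter P).image (fun p : V × V => s(p.2, cl p.1))).card : ℝ) := by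
        exact_mod_cast Finset.card_le_card hsub
    _ ≤ ((Finset.univ.filter P).card : ℝ) := by
        exact_mod_cast Finset.card_image_le


/-- After one application of the exponential start time low-diameter decomposition with
constant parameter `β = 1/(2c)`, the contracted inter-cluster graph has `O(n)` edges in
expectation: the expected number of unordered pairs of distinct cluster labels joined by
an edge of `G` is at most `C · e^{1/c} · n`. -/
theorem expected_contracted_edges_linear
    : ∃ C : ℝ, 0 < C ∧
      ∀ (c : ℝ), 0 < c →
      ∀ (V : Type) [Fintype V] [LinearOrder V] (G : SimpleGraph V)
        [DecidableRel G.Adj],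
        G.Connected → 2 ≤ Fintype.card V →
      ∀ (Ω : Type) [MeasurableSpace Ω] (μ : Measure Ω), IsProbabilityMeasure μ →
      ∀ (δ : V → Ω → ℝ),
        (∀ u : V, Measure.map (δ u) μ = expMeasure (1 / (2 * c))) →
        iIndepFun δ μ →
      ∀ (cluster : Ω → V → V),
        (∀ (ω : Ω) (w : V),
          IsLeast {u : V | ∀ u' : V,
              (G.dist u w : ℝ) - δ u ω ≤ (G.dist u' w : ℝ) - δ u' ω}
            (cluster ω w)) →
        ∫ ω, ((((G.edgeFinset.image (Sym2.map (cluster ω))).filter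
            (fun e => ¬ e.IsDiag)).card : ℝ)) ∂μ
          ≤ C * Real.exp (1 / c) * (Fintype.card V : ℝ) := by
  refine ⟨1, one_pos, ?_⟩
  intro c hc V _ _ G _ hconn hcard Ω _ μ hμ δ hmapδ hindepδ cluster hcluster
  classical
  haveI := hμ
  set β : ℝ := 1 / (2 * c) with hβdef
  have hβ : 0 < β := by positivity
  haveI : IsProbabilityMeasure (expMeasure β) := isProbabilityMeasure_expMeasure hβ
  have haem : ∀ u, AEMeasurable (δ u) μ := by
    intro u
    by_contra h
    have h0 := hmapδ u
    rw [Measure.map_of_not_aemeasurable h] at h0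
    have := congrArg (fun m : Measure ℝ => m Set.univ) h0
    simp only [Measure.coe_zero, Pi.zero_apply, measure_univ] at this
    exact zero_ne_one this
  set δm : V → Ω → ℝ := fun u => (haem u).mk (δ u) with hδm
  have hmeas : ∀ u, Measurable (δm u) := fun u => (haem u).measurable_mk
  have haeeq : ∀ u, δ u =ᵐ[μ] δm u := fun u => (haem u).ae_eq_mk
  have hmap' : ∀ u, μ.map (δm u) = expMeasure β := fun u => by
    rw [← Measure.map_congr (haeeq u)]; exact hmapδ u
  have hindep' : iIndepFun δm μ := iIndepFun_congr' hindepδ haeeq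
  have hall : ∀ᵐ ω ∂μ, ∀ u, δ u ω = δm u ω := MeasureTheory.ae_all_iff.2 haeeq
  set Cset : V → V → Set Ω := fun v a =>
    {ω | ∀ u' : V, (G.dist a v : ℝ) - δm a ω ≤ (G.dist u' v : ℝ) - δm u' ω + 2} with hCset
  have hCmeas : ∀ v a, MeasurableSet (Cset v a) := by
    intro v a
    have heq : Cset v a = ⋂ u' : V,
        {ω | (G.dist a v : ℝ) - δm a ω ≤ (G.dist u' v : ℝ) - δm u' ω + 2} := by
      ext ω
      simp only [hCset, Set.mem_setOf_eq, Set.mem_iInter]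
    rw [heq]
    exact MeasurableSet.iInter fun u' =>
      measurableSet_le (measurable_const.sub (hmeas a))
        ((measurable_const.sub (hmeas u')).add_const 2)
  set g : Ω → ℝ := fun ω => ∑ v : V, ∑ a : V,
    Set.indicator (Cset v a) (fun _ => (1:ℝ)) ω with hg
  have hgint : Integrable g μ := integrable_finset_sum _ fun v _ =>
    integrable_finset_sum _ fun a _ => (integrable_const (1:ℝ)).indicator (hCmeas v a)
  have hle : ∀ᵐ ω ∂μ, ((((G.edgeFinset.image (Sym2.map (cluster ω))).filter
      (fun e => ¬ e.IsDiag)).card : ℝ)) ≤ g ω := by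
    filter_upwards [hall] with ω hω
    have hcl : ∀ w u' : V, (G.dist (cluster ω w) w : ℝ) - δm (cluster ω w) ω
        ≤ (G.dist u' w : ℝ) - δm u' ω := by
      intro w u'
      have h1 := (hcluster ω w).1 u'
      rw [hω (cluster ω w), hω u'] at h1
      exact h1
    have hmain := card_le_sum_ite G hconn (fun u => δm u ω) (cluster ω) hcl
    refine le_trans hmain (le_of_eq ?_)
    refine Finset.sum_congr rfl fun v _ => Finset.sum_congr rfl fun a _ => ?_
    rw [Set.indicator_apply]
    exact if_congr Iff.rfl rfl rfl
  have hint : ∫ ω, ((((G.edgeFinset.image (Sym2.map (cluster ω))).filter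
      (fun e => ¬ e.IsDiag)).card : ℝ)) ∂μ ≤ ∫ ω, g ω ∂μ :=
    integral_mono_of_nonneg (Filter.Eventually.of_forall fun ω => by positivity) hgint hle
  have hgval : ∫ ω, g ω ∂μ = ∑ v : V, ∑ a : V, (μ (Cset v a)).toReal := by
    rw [hg, integral_finset_sum _ (fun v _ => integrable_finset_sum _ fun a _ =>
      (integrable_const (1:ℝ)).indicator (hCmeas v a))]
    refine Finset.sum_congr rfl fun v _ => ?_
    rw [integral_finset_sum _ (fun a _ => (integrable_const (1:ℝ)).indicator (hCmeas v a))]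
    refine Finset.sum_congr rfl fun a _ => ?_
    rw [integral_indicator_const (1:ℝ) (hCmeas v a)]
    simp [Measure.real]
  have hv : ∀ v : V, ∑ a : V, (μ (Cset v a)).toReal ≤ Real.exp (1/c) := by
    intro v
    have h1 : ∑ a : V, μ (Cset v a) ≤ ENNReal.ofReal (Real.exp (2*β)) :=
      core_sum μ hβ δm hmeas hmap' hindep' hcard (fun u => (G.dist u v : ℝ))
    have h2 : ∑ a : V, (μ (Cset v a)).toReal = (∑ a : V, μ (Cset v a)).toReal :=
      (ENNReal.toReal_sum (fun a _ => measure_ne_top μ _)).symm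
    rw [h2]
    have h3 : (∑ a : V, μ (Cset v a)).toReal ≤ (ENNReal.ofReal (Real.exp (2*β))).toReal :=
      ENNReal.toReal_mono ENNReal.ofReal_ne_top h1
    rw [ENNReal.toReal_ofReal (Real.exp_pos _).le] at h3
    have h4 : 2 * β = 1 / c := by
      rw [hβdef]
      field_simp
    rw [h4] at h3
    exact h3
  calc ∫ ω, ((((G.edgeFinset.image (Sym2.map (cluster ω))).filter
      (fun e => ¬ e.IsDiag)).card : ℝ)) ∂μ
      ≤ ∫ ω, g ω ∂μ := hint
    _ = ∑ v : V, ∑ a : V, (μ (Cset v a)).toReal := hgval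
    _ ≤ ∑ _v : V, Real.exp (1/c) := Finset.sum_le_sum fun v _ => hv v
    _ = (Fintype.card V : ℝ) * Real.exp (1/c) := by
        rw [Finset.sum_const, Finset.card_univ, nsmul_eq_mul]
    _ = 1 * Real.exp (1/c) * (Fintype.card V : ℝ) := by ring
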